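/- Let T be a locally finite nonsingular undirected tree. Then its dual graph T̂ — with vertex set T^1, edge set the reduced paths of length 2, and range/source maps r̂(ef) = e, ŝ(ef) = f — is a row-finite, finitely aligned multitree with no sources. -/

import Mathlib

/-- A directed graph: vertices, edges, and range/source maps. -/
structure DirGraph where
  V : Type
  E : Type
  r : E → V
  s : E → V

namespace DirGraph

/-- `G.IsDPath v w p` : `p` is a directed path from `w` to `v`, i.e. a (possibly empty)
composable sequence of edges with range `v` and source `w`. -/
def IsDPath (G : DirGraph) : G.V → G.V → List G.E → Prop
  | v, w, [] => v = w
  | v, w, e :: p => G.r e = v ∧ G.IsDPath (G.s e) w p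

/-- The relation `v ≤ w` : there is a directed path from `w` to `v`. -/
def Le (G : DirGraph) (v w : G.V) : Prop := ∃ p, G.IsDPath v w p

/-- A multitree: there is at most one directed path between any two vertices. -/
def IsMultitree (G : DirGraph) : Prop :=
  ∀ v w p q, G.IsDPath v w p → G.IsDPath v w q → p = q

/-- Row-finite: every vertex receives finitely many edges. -/
def RowFinite (G : DirGraph) : Prop := ∀ v, {e : G.E | G.r e = v}.Finite

/-- No sources: every vertex receives at least one edge. -/
def NoSources (G : DirGraph) : Prop := ∀ v, ∃ e, G.r e = v

/-- The set of minimal common upper bounds of `v` and `w`. -/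
def mub (G : DirGraph) (v w : G.V) : Set G.V :=
  {u | G.Le v u ∧ G.Le w u ∧ ∀ u', G.Le v u' → G.Le w u' → G.Le u' u → u' = u}

/-- Finitely aligned: any two vertices have finitely many minimal common upper bounds. -/
def FinAligned (G : DirGraph) : Prop := ∀ v w, (G.mub v w).Finite

/-- Infinite (directed) paths in `G`. -/
def InfPath (G : DirGraph) := {l : ℕ → G.E // ∀ n, G.s (l n) = G.r (l (n + 1))}

/-- Shift-tail equivalence of infinite paths. -/
def stEquiv (G : DirGraph) (a b : G.InfPath) : Prop :=
  ∃ m n : ℕ, ∀ k, a.1 (m + k) = b.1 (n + k)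

/-- The boundary `∂G`: shift-tail equivalence classes of infinite paths. -/
def Bdry (G : DirGraph) := Quot G.stEquiv

/-- The cylinder set `Z_∂(v) ⊆ ∂G` of boundary classes of infinite paths with range `v`. -/
def Zb (G : DirGraph) (v : G.V) : Set G.Bdry :=
  {x | ∃ l : G.InfPath, G.r (l.1 0) = v ∧ Quot.mk G.stEquiv l = x}

/-- The cylinder-set topology on the boundary `∂G`. -/
def bdryTop (G : DirGraph) : TopologicalSpace G.Bdry :=
  TopologicalSpace.generateFrom {S | ∃ v, S = G.Zb v}

/-- The cylinder set `Z(v) ⊆ Ω = G.V ⊕ ∂G`: vertices `w` with a path from `w` to `v`,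
together with boundary classes of infinite paths through `v`. -/
def Zfull (G : DirGraph) (v : G.V) : Set (G.V ⊕ G.Bdry) :=
  {x | Sum.elim (fun w => G.Le v w) (fun b => b ∈ G.Zb v) x}

end DirGraph

/-- An undirected graph: edges come with an involutive, fixed-point-free reversal. -/
structure UGraph where
  V : Type
  E : Type
  r : E → V
  s : E → V
  bar : E → E
  bar_bar : ∀ e, bar (bar e) = e
  bar_ne : ∀ e, bar e ≠ e
  r_bar : ∀ e, r (bar e) = s e

namespace UGraph

/-- `T.IsUPath v w p` : `p` is a walk from `w` to `v` in the undirected graph `T`. -/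
def IsUPath (T : UGraph) : T.V → T.V → List T.E → Prop
  | v, w, [] => v = w
  | v, w, e :: p => T.r e = v ∧ T.IsUPath (T.s e) w p

/-- A reduced path: a walk with no backtracking. -/
def IsRedPath (T : UGraph) (v w : T.V) (p : List T.E) : Prop :=
  T.IsUPath v w p ∧ p.Chain' (fun e f => f ≠ T.bar e)

/-- A tree: there is a unique reduced path between any two vertices. -/
def IsTree (T : UGraph) : Prop := ∀ v w, ∃! p, T.IsRedPath v w p

/-- Locally finite: every vertex receives finitely many edges. -/
def LocFinite (T : UGraph) : Prop := ∀ v, {e : T.E | T.r e = v}.Finite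

/-- Nonsingular: every vertex receives at least two edges. -/
def Nonsingular (T : UGraph) : Prop := ∀ v, ∃ e f, e ≠ f ∧ T.r e = v ∧ T.r f = v

/-- The dual directed graph `T̂`: vertices are the edges of `T`, edges are the reduced
paths of length 2 in `T`, with `r̂(ef) = e` and `ŝ(ef) = f`. -/
def dual (T : UGraph) : DirGraph where
  V := T.E
  E := {p : T.E × T.E // T.s p.1 = T.r p.2 ∧ p.2 ≠ T.bar p.1}
  r := fun p => p.1.1
  s := fun p => p.1.2

end UGraph

namespace UGraph

variable {T : UGraph}

lemma s_bar (e : T.E) : T.s (T.bar e) = T.r e := by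
  have := T.r_bar (T.bar e)
  rw [T.bar_bar] at this
  exact this.symm

lemma upath_append : ∀ {p : List T.E} {q a b c}, T.IsUPath a b p → T.IsUPath b c q →
    T.IsUPath a c (p ++ q) := by
  intro p
  induction p with
  | nil =>
    intro q a b c h1 h2
    have : a = b := h1
    subst this
    simpa using h2
  | cons e p ih =>
    intro q a b c h1 h2
    exact ⟨h1.1, ih h1.2 h2⟩

lemma upath_split : ∀ {p : List T.E} {e q a c}, T.IsUPath a c (p ++ e :: q) →
    T.IsUPath a (T.r e) p ∧ T.IsUPath (T.r e) c (e :: q) := by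
  intro p
  induction p with
  | nil =>
    intro e q a c h
    exact ⟨h.1.symm, ⟨rfl, h.2⟩⟩
  | cons x p ih =>
    intro e q a c h
    obtain ⟨h1, h2⟩ := ih h.2
    exact ⟨⟨h.1, h1⟩, h2⟩

lemma upath_reverse : ∀ {p : List T.E} {a b}, T.IsUPath a b p →
    T.IsUPath b a ((p.map T.bar).reverse) := by
  intro p
  induction p with
  | nil =>
    intro a b h
    exact (h : a = b).symm
  | cons e p ih =>
    intro a b h
    have h2 := ih h.2
    have : T.IsUPath (T.s e) a [T.bar e] := ⟨T.r_bar e, by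
      show T.s (T.bar e) = a
      rw [s_bar]; exact h.1⟩
    have := upath_append h2 this
    simpa using this

lemma chain_bar_reverse {p : List T.E} (h : p.Chain' (fun e f => f ≠ T.bar e)) :
    ((p.map T.bar).reverse).Chain' (fun e f => f ≠ T.bar e) := by
  unfold List.Chain' at h ⊢
  rw [List.isChain_reverse, List.isChain_map]
  refine h.imp ?_
  intro a b hab
  show T.bar a ≠ T.bar (T.bar b)
  rw [T.bar_bar]
  exact fun hc => hab hc.symm

lemma getLast_cons_concat {α : Type} (l : List α) (a b : α) :
    (a :: (l ++ [b])).getLast? = some b := by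
  rw [← List.cons_append]
  exact List.getLast?_concat

lemma no_loop (htree : T.IsTree) (e : T.E) : T.s e ≠ T.r e := by
  intro h
  obtain ⟨g, -, hu⟩ := htree (T.r e) (T.r e)
  have h1 : T.IsRedPath (T.r e) (T.r e) [e] := ⟨⟨rfl, h⟩, by simp [List.Chain']⟩
  have h2 : T.IsRedPath (T.r e) (T.r e) ([] : List T.E) := ⟨rfl, by simp [List.Chain']⟩
  have := (hu _ h1).trans (hu _ h2).symm
  simp at this

lemma dpath_to_red : ∀ {p : List (T.dual).E} {v w}, (T.dual).IsDPath v w p →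
    T.IsRedPath (T.r v) (T.s w) (v :: p.map (fun x => x.1.2)) := by
  intro p
  induction p with
  | nil =>
    intro v w h
    have hvw : v = w := h
    subst hvw
    exact ⟨⟨rfl, rfl⟩, List.isChain_singleton _⟩
  | cons x p ih =>
    intro v w h
    obtain ⟨hx, hp⟩ := h
    have hx' : x.1.1 = v := hx
    obtain ⟨hup, hch⟩ := ih hp
    refine ⟨⟨rfl, ?_, hup.2⟩, ?_⟩
    · rw [← hx']; exact x.2.1.symm
    · refine List.isChain_cons_cons.mpr ⟨?_, hch⟩
      rw [← hx']; exact x.2.2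

lemma dpath_ext : ∀ {p q : List (T.dual).E} {v w}, (T.dual).IsDPath v w p →
    (T.dual).IsDPath v w q →
    p.map (fun x => x.1.2) = q.map (fun x => x.1.2) → p = q := by
  intro p
  induction p with
  | nil =>
    intro q v w _ _ h
    exact (List.map_eq_nil_iff.mp h.symm).symm
  | cons x p ih =>
    intro q v w hp hq h
    cases q with
    | nil => simp at h
    | cons y q' =>
      simp only [List.map_cons, List.cons.injEq] at h
      have h1 : x.1.1 = y.1.1 := by
        have hxv : x.1.1 = v := hp.1
        have hyv : y.1.1 = v := hq.1
        rw [hxv, hyv]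
      have hxy : x = y := Subtype.ext (Prod.ext h1 h.1)
      subst hxy
      have := ih hp.2 hq.2 h.2
      rw [this]

lemma le_cases : ∀ (p : List (T.dual).E) {v u : T.E}, (T.dual).IsDPath v u p →
    v = u ∨ ∃ M, T.IsRedPath (T.r v) (T.s u) (v :: M ++ [u]) := by
  intro p
  induction p with
  | nil => intro v u hp; exact Or.inl hp
  | cons x q ih =>
    intro v u hp
    obtain ⟨hx, hq⟩ := hp
    have hx1 : x.1.1 = v := hx
    have hsr : T.s v = T.r x.1.2 := by rw [← hx1]; exact x.2.1
    have hnb : x.1.2 ≠ T.bar v := by rw [← hx1]; exact x.2.2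
    rcases ih hq with h | ⟨M, hM⟩
    · have h' : x.1.2 = u := h
      subst h'
      refine Or.inr ⟨[], ⟨⟨rfl, hsr.symm, rfl⟩, ?_⟩⟩
      simpa [List.Chain'] using hnb
    · refine Or.inr ⟨x.1.2 :: M, ⟨⟨rfl, hsr.symm, hM.1.2⟩, ?_⟩⟩
      exact List.isChain_cons_cons.mpr ⟨hnb, hM.2⟩

lemma red_le : ∀ (M : List T.E) {v u : T.E},
    T.IsRedPath (T.r v) (T.s u) (v :: M ++ [u]) → (T.dual).Le v u := by
  intro M
  induction M with
  | nil =>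
    intro v u h
    have hru : T.r u = T.s v := h.1.2.1
    have hnb : u ≠ T.bar v := (List.isChain_cons_cons.mp h.2).1
    exact ⟨[⟨(v, u), hru.symm, hnb⟩], rfl, rfl⟩
  | cons e M ih =>
    intro v u h
    have h1 : T.r e = T.s v := h.1.2.1
    have hne : e ≠ T.bar v := (List.isChain_cons_cons.mp h.2).1
    have hred : T.IsRedPath (T.r e) (T.s u) (e :: M ++ [u]) :=
      ⟨⟨rfl, h.1.2.2⟩, (List.isChain_cons_cons.mp h.2).2⟩
    obtain ⟨q, hq⟩ := ih hred
    exact ⟨⟨(v, e), h1.symm, hne⟩ :: q, rfl, hq⟩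

end UGraph


/-- The dual graph of a locally finite nonsingular undirected tree is a row-finite,
finitely aligned multitree with no sources. -/
theorem stmt9 (T : UGraph) [Countable T.V] [Countable T.E]
    (htree : T.IsTree) (hlf : T.LocFinite) (hns : T.Nonsingular) :
    (T.dual).IsMultitree ∧ (T.dual).RowFinite ∧ (T.dual).NoSources ∧
      (T.dual).FinAligned := by
  constructor
  · -- Multitree
    intro v w p q hp hq
    have h1 := UGraph.dpath_to_red hp
    have h2 := UGraph.dpath_to_red hq
    obtain ⟨g, -, hu⟩ := htree (T.r v) (T.s w)
    have heq := (hu _ h1).trans (hu _ h2).symm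
    replace heq := List.cons.inj heq
    exact UGraph.dpath_ext hp hq heq.2
  refine ⟨?_, ?_, ?_⟩
  · -- RowFinite
    intro v
    have hfin : Finite {f : T.E // T.r f = T.s v} := (hlf (T.s v)).to_subtype
    have hinj : Function.Injective
        (fun x : {e : (T.dual).E | (T.dual).r e = v} =>
          (⟨x.1.1.2, by
            have h1 : x.1.1.1 = v := x.2
            have := x.1.2.1
            rw [h1] at this
            exact this.symm⟩ : {f : T.E // T.r f = T.s v})) := by
      intro x y hxy
      simp only [Subtype.mk.injEq] at hxy
      have h1 : x.1.1.1 = v := x.2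
      have h2 : y.1.1.1 = v := y.2
      exact Subtype.ext (Subtype.ext (Prod.ext (h1.trans h2.symm) hxy))
    exact Set.finite_coe_iff.mp (Finite.of_injective _ hinj)
  · -- NoSources
    intro v
    obtain ⟨e, f, hef, he, hf⟩ := hns (T.s v)
    by_cases hbe : e = T.bar v
    · refine ⟨⟨(v, f), hf.symm, ?_⟩, rfl⟩
      intro hc; exact hef (hbe.trans hc.symm)
    · exact ⟨⟨(v, e), he.symm, hbe⟩, rfl⟩
  · -- FinAligned
    intro v w
    obtain ⟨g, hg, hguniq⟩ := htree (T.s v) (T.s w)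
    set C : Set T.V := insert (T.s v) (insert (T.s w) (T.s '' {e | e ∈ g})) with hCdef
    have hC : C.Finite := ((g.finite_toSet.image T.s).insert _).insert _
    have hfin : {u : T.E | T.r u ∈ C}.Finite := by
      have h2 : {u : T.E | T.r u ∈ C} = ⋃ c ∈ C, {u : T.E | T.r u = c} := by
        ext u
        simp only [Set.mem_setOf_eq, Set.mem_iUnion]
        exact ⟨fun h => ⟨_, h, rfl⟩, fun ⟨c, hc, h⟩ => h ▸ hc⟩
      rw [h2]
      exact hC.biUnion fun c _ => hlf c
    refine Set.Finite.subset ((hfin.insert v).insert w) ?_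
    intro u hu
    obtain ⟨huv, huw, hmin⟩ := hu
    simp only [Set.mem_insert_iff, Set.mem_setOf_eq]
    by_cases h1 : u = w
    · exact Or.inl h1
    by_cases h2 : u = v
    · exact Or.inr (Or.inl h2)
    refine Or.inr (Or.inr ?_)
    obtain ⟨pv, hpv⟩ := huv
    obtain ⟨pw, hpw⟩ := huw
    rcases UGraph.le_cases pv hpv with h | ⟨M, hM⟩
    · exact absurd h.symm h2
    rcases UGraph.le_cases pw hpw with h | ⟨N, hN⟩
    · exact absurd h.symm h1
    rcases M.eq_nil_or_concat with rfl | ⟨M', m, rfl⟩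
    · -- r u = s v
      have h3 : T.r u = T.s v := hM.1.2.1
      show T.r u ∈ C
      rw [h3]; exact Set.mem_insert _ _
    rw [List.concat_eq_append] at hM
    rcases N.eq_nil_or_concat with rfl | ⟨N', n, rfl⟩
    · have h3 : T.r u = T.s w := hN.1.2.1
      show T.r u ∈ C
      rw [h3]; exact Set.mem_insert_iff.mpr (Or.inr (Set.mem_insert _ _))
    rw [List.concat_eq_append] at hN
    -- main case
    have hMu := hM.1.2
    have hNu := hN.1.2
    obtain ⟨hMv, hMtail⟩ := UGraph.upath_split (p := M' ++ [m]) (q := []) hMu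
    obtain ⟨hNw, hNtail⟩ := UGraph.upath_split (p := N' ++ [n]) (q := []) hNu
    -- s m = r u  and  s n = r u
    obtain ⟨hMv', hMm⟩ := UGraph.upath_split (p := M') (e := m) (q := []) hMv
    obtain ⟨hNw', hNn⟩ := UGraph.upath_split (p := N') (e := n) (q := []) hNw
    have hsm : T.s m = T.r u := hMm.2
    have hsn : T.s n = T.r u := hNn.2
    -- chain facts
    have hchM : ((v :: (M' ++ [m])) ++ [u]).Chain' (fun e f => f ≠ T.bar e) := by
      exact hM.2
    have hchN : ((w :: (N' ++ [n])) ++ [u]).Chain' (fun e f => f ≠ T.bar e) := by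
      exact hN.2
    obtain ⟨hchM1, -, hchM3⟩ := List.isChain_append.mp hchM
    obtain ⟨hchN1, -, hchN3⟩ := List.isChain_append.mp hchN
    have hbarM := hchM3 m (UGraph.getLast_cons_concat M' v m) u rfl
    have hbarN := hchN3 n (UGraph.getLast_cons_concat N' w n) u rfl
    -- Le v m, Le w n, Le m u
    have hLvm : (T.dual).Le v m := by
      refine UGraph.red_le M' ⟨?_, hchM1⟩
      refine ⟨rfl, ?_⟩
      rw [hsm]
      exact hMv
    have hLwn : (T.dual).Le w n := by
      refine UGraph.red_le N' ⟨?_, hchN1⟩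
      refine ⟨rfl, ?_⟩
      rw [hsn]
      exact hNw
    have hLmu : (T.dual).Le m u := by
      refine UGraph.red_le [] ⟨⟨rfl, hsm.symm, rfl⟩, ?_⟩
      exact List.isChain_cons_cons.mpr ⟨hbarM, List.isChain_singleton _⟩
    by_cases hmn : m = n
    · subst hmn
      have := hmin m hLvm hLwn hLmu
      subst this
      exact absurd hsm (UGraph.no_loop htree m)
    · -- build the reduced path from s v to s w through r u
      set G2 : List T.E := (((N' ++ [n]).map T.bar).reverse) with hG2def
      have hGpath : T.IsUPath (T.s v) (T.s w) ((M' ++ [m]) ++ G2) :=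
        UGraph.upath_append hMv (UGraph.upath_reverse hNw)
      have hG2head : G2.head? = some (T.bar n) := by
        rw [hG2def, List.head?_reverse, List.map_append]
        rw [List.map_cons, List.map_nil]; exact List.getLast?_concat (l := List.map T.bar N')
      have hGchain : ((M' ++ [m]) ++ G2).Chain' (fun e f => f ≠ T.bar e) := by
        refine List.isChain_append.mpr ⟨hchM1.tail, UGraph.chain_bar_reverse hchN1.tail, ?_⟩
        intro x hx y hy
        have hxm : x = m := by
          have : (M' ++ [m]).getLast? = some m := List.getLast?_concat
          rw [this] at hx
          exact (Option.some_inj.mp hx.symm)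
        have hyn : y = T.bar n := by
          rw [hG2head] at hy
          exact (Option.some_inj.mp hy.symm)
        rw [hxm, hyn]
        intro hc
        apply hmn
        have := congrArg T.bar hc
        rw [T.bar_bar, T.bar_bar] at this
        exact this.symm
      have hGg : (M' ++ [m]) ++ G2 = g := hguniq _ ⟨hGpath, hGchain⟩
      have hmg : m ∈ g := by
        rw [← hGg]; simp
      show T.r u ∈ C
      rw [← hsm]
      exact Set.mem_insert_iff.mpr (Or.inr (Set.mem_insert_iff.mpr (Or.inr ⟨m, hmg, rfl⟩)))
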